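/- Let L1, L2, D1, D2 be positive integers. Let ℓ : {1,…,L2}×{1,…,L1}×({1,…,D2}×{1,…,D2}) → ℝ, and let R_1,…,R_{L1} be matrices on ({1,…,D2}×{1,…,D2})×({1,…,D1}×{1,…,D1}). Define the LiGO matrix M = L_depth · R_width, where L_depth[(i,a),(j,b)] = ℓ(i,j,a) if a = b and 0 otherwise, and R_width is block diagonal with blocks R_1,…,R_{L1}. Then M admits a Monarch factorization: M = P_1 · diag(L^{(a)} : a ∈ {1,…,D2}×{1,…,D2}) · P_2ᵀ · R_width, where L^{(a)} ∈ ℝ^{L2×L1} is defined by L^{(a)}_{i,j} = ℓ(i,j,a), diag(L^{(a)}) denotes the block-diagonal matrix with these blocks, and P_1, P_2 are the permutation matrices realizing the index bijections (i,a) ↦ (a,i) on rows and (j,a) ↦ (a,j) on columns. Hence every LiGO operator with the depth–width decomposition is a Monarch matrix. -/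
import Mathlib


open Matrix

/-- Every LiGO operator with the depth–width decomposition admits a Monarch
factorization `M = P₁ · diag(L⁽ᵃ⁾) · P₂ᵀ · R_width`. -/
theorem stmt_13 (L1 L2 D1 D2 : ℕ)
    (hL1 : 0 < L1) (hL2 : 0 < L2) (hD1 : 0 < D1) (hD2 : 0 < D2)
    (ℓ : Fin L2 → Fin L1 → (Fin D2 × Fin D2) → ℝ)
    (R : Fin L1 → Matrix (Fin D2 × Fin D2) (Fin D1 × Fin D1) ℝ)
    (Ld : Matrix (Fin L2 × (Fin D2 × Fin D2)) (Fin L1 × (Fin D2 × Fin D2)) ℝ)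
    (hLd : ∀ i a j b, Ld (i, a) (j, b) = if a = b then ℓ i j a else 0)
    (Rw : Matrix (Fin L1 × (Fin D2 × Fin D2)) (Fin L1 × (Fin D1 × Fin D1)) ℝ)
    (hRw : ∀ j a j' b, Rw (j, a) (j', b) = if j = j' then R j a b else 0)
    (M : Matrix (Fin L2 × (Fin D2 × Fin D2)) (Fin L1 × (Fin D1 × Fin D1)) ℝ)
    (hM : M = Ld * Rw)
    (Lblk : Matrix ((Fin D2 × Fin D2) × Fin L2) ((Fin D2 × Fin D2) × Fin L1) ℝ)
    (hLblk : ∀ a i b j, Lblk (a, i) (b, j) = if a = b then ℓ i j a else 0)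
    (P1 : Matrix (Fin L2 × (Fin D2 × Fin D2)) ((Fin D2 × Fin D2) × Fin L2) ℝ)
    (hP1 : ∀ p q, P1 p q = if q = Prod.swap p then 1 else 0)
    (P2 : Matrix (Fin L1 × (Fin D2 × Fin D2)) ((Fin D2 × Fin D2) × Fin L1) ℝ)
    (hP2 : ∀ p q, P2 p q = if q = Prod.swap p then 1 else 0) :
    M = P1 * Lblk * P2ᵀ * Rw := by
  have key : Ld = P1 * Lblk * P2ᵀ := by
    ext ⟨i, a⟩ ⟨j, b⟩
    simp [mul_apply, transpose_apply, hP1, hP2, hLblk, hLd, ite_mul, mul_ite,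
      Finset.sum_ite_eq', Prod.swap_prod_mk]
    rw [Finset.sum_eq_single ((a, i) : (Fin D2 × Fin D2) × Fin L2)]
    · by_cases h : a = b <;> simp [h]
    · intro c _ hc; simp [hc]
    · simp
  rw [hM, key]
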